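/- Let M be a relational Fraïssé structure in a language all of whose relation symbols have arity at most 2. If M is locally replicable, then every basic open set of M, with its induced structure, is isomorphic to M. -/
import Mathlib


open FirstOrder FirstOrder.Language Set CategoryTheory

universe u v w x

section Defs

variable (L : FirstOrder.Language.{u, v}) (M : Type w) [L.Structure M]

/-- `X ⊆ M` contains a copy of `M`: there is a substructure of `M` with domain
contained in `X` that is isomorphic to `M`. -/
def ContainsCopy (X : Set M) : Prop :=
  ∃ S : L.Substructure M, (S : Set M) ⊆ X ∧ Nonempty (S ≃[L] M)

/-- The induced substructure on `C` is isomorphic to `M`. -/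
def IsCopy (C : Set M) : Prop :=
  ∃ S : L.Substructure M, (S : Set M) = C ∧ Nonempty (S ≃[L] M)

/-- The galah property: for every partition `(C, Cᶜ)` of the domain of `M`, either the
induced substructure on `C` is isomorphic to `M`, or `Cᶜ` contains a copy of `M`. -/
def GalahProperty : Prop := ∀ C : Set M, IsCopy L M C ∨ ContainsCopy L M Cᶜ

/-- Indivisibility: for every partition `(C, Cᶜ)` of the domain of `M`, one of the two
parts contains a copy of `M`. -/
def Indivisible : Prop := ∀ C : Set M, ContainsCopy L M C ∨ ContainsCopy L M Cᶜ

/-- `v` and `b` realize the same quantifier-free type over the parameter set `A`. -/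
def SameQfTypeOver (A : Set M) (v b : M) : Prop :=
  ∀ (n : ℕ) (φ : L.Formula (Fin (n + 1))), φ.IsQF →
    ∀ g : Fin n → M, (∀ i, g i ∈ A) →
      (φ.Realize (Fin.cons v g) ↔ φ.Realize (Fin.cons b g))

/-- Local replicability: every basic open set
`{v : M | qftp(v / A) = qftp(b / A)}`, for `A` a finite substructure of `M` and
`b ∈ M \\ A`, contains a copy of `M`. -/
def LocallyReplicable : Prop :=
  ∀ A : L.Substructure M, (A : Set M).Finite → ∀ b : M, b ∉ (A : Set M) →
    ContainsCopy L M {v : M | SameQfTypeOver L M (A : Set M) v b}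

/-- The infinite `k`-sunflower property: every structure on `k`-sets isomorphic to `M`
contains an induced substructure isomorphic to `M` whose domain is a sunflower. -/
def InfiniteKSunflowerProperty (k : ℕ) : Prop :=
  ∀ (α : Type x) (X : Set (Finset α)), (∀ v ∈ X, v.card = k) →
    ∀ [L.Structure ↥X], Nonempty (M ≃[L] ↥X) →
      ∃ (f : M ↪[L] ↥X) (c : Set α),
        ∀ a b : M, a ≠ b →
          ((f a : Finset α) : Set α) ∩ ((f b : Finset α) : Set α) = c

/-- The infinite sunflower property: the infinite `k`-sunflower property for all `k ≥ 1`. -/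
def InfiniteSunflowerProperty : Prop :=
  ∀ k : ℕ, 1 ≤ k → InfiniteKSunflowerProperty.{u, v, w, x} L M k

/-- A class of structures has strong amalgamation if any two embeddings from a common
structure can be amalgamated so that the images of the two structures intersect exactly
in the image of the common structure. -/
def HasStrongAmalgamation (K : Set (Bundled.{w} L.Structure)) : Prop :=
  ∀ A B₀ B₁ : Bundled.{w} L.Structure, A ∈ K → B₀ ∈ K → B₁ ∈ K →
    ∀ (f₀ : A ↪[L] B₀) (f₁ : A ↪[L] B₁),
      ∃ C : Bundled.{w} L.Structure, C ∈ K ∧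
        ∃ (g₀ : B₀ ↪[L] C) (g₁ : B₁ ↪[L] C),
          g₀.comp f₀ = g₁.comp f₁ ∧
          Set.range g₀ ∩ Set.range g₁ = Set.range (g₀.comp f₀)

end Defs


open FirstOrder.Language.Structure

section Aux12

namespace Aux12

open FirstOrder FirstOrder.Language Set

variable {L : FirstOrder.Language.{u, v}} {M : Type w} [L.Structure M]

/-- In a relational language, every set is the carrier of a substructure. -/
def ofSet [L.IsRelational] (s : Set M) : L.Substructure M :=
  ⟨s, fun {_} f => isEmptyElim f⟩

lemma mem_ofSet [L.IsRelational] {s : Set M} {x : M} : x ∈ ofSet (L := L) s ↔ x ∈ s :=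
  Iff.rfl

lemma coe_ofSet [L.IsRelational] {s : Set M} : ((ofSet (L := L) s : L.Substructure M) : Set M) = s :=
  rfl

noncomputable def extFun [L.IsRelational] (U : Set M) (S : L.Substructure ↥(ofSet (L := L) U))
    (f : ↥S ↪[L] ↥(ofSet (L := L) U)) {W : L.Substructure M} (w : ↥W) : M := by
  classical
  exact if hw : ∃ h : (w : M) ∈ ofSet (L := L) U, (⟨(w : M), h⟩ : ↥(ofSet (L := L) U)) ∈ S
    then ↑(f ⟨⟨(w : M), hw.choose⟩, hw.choose_spec⟩) else (w : M)

lemma extFun_pos [L.IsRelational] {U : Set M} {S : L.Substructure ↥(ofSet (L := L) U)}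
    {f : ↥S ↪[L] ↥(ofSet (L := L) U)} {W : L.Substructure M} (w : ↥W)
    (h1 : (w : M) ∈ ofSet (L := L) U) (h2 : (⟨(w : M), h1⟩ : ↥(ofSet (L := L) U)) ∈ S) :
    extFun U S f w = ↑(f ⟨⟨(w : M), h1⟩, h2⟩) := by
  unfold extFun
  rw [dif_pos ⟨h1, h2⟩]

lemma extFun_neg [L.IsRelational] {U : Set M} {S : L.Substructure ↥(ofSet (L := L) U)}
    {f : ↥S ↪[L] ↥(ofSet (L := L) U)} {W : L.Substructure M} (w : ↥W)
    (hw : ¬ ∃ h : (w : M) ∈ ofSet (L := L) U, (⟨(w : M), h⟩ : ↥(ofSet (L := L) U)) ∈ S) :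
    extFun U S f w = (w : M) := by
  unfold extFun
  rw [dif_neg hw]

/-- The key ultrahomogeneity transfer lemma. -/
lemma ultra_aux [L.IsRelational] (hbin : ∀ n : ℕ, 2 < n → IsEmpty (L.Relations n))
    (hM : L.IsUltrahomogeneous M) (A : L.Substructure M) (hA : (A : Set M).Finite)
    (U : Set M)
    (hUA : ∀ a ∈ (A : Set M), a ∉ U)
    (hfix : ∀ σ : M ≃[L] M, (∀ a ∈ (A : Set M), σ a = a) → ∀ v ∈ U, σ v ∈ U)
    (hrel2l : ∀ u ∈ U, ∀ v ∈ U, ∀ a ∈ (A : Set M), ∀ R : L.Relations 2,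
      RelMap R ![u, a] ↔ RelMap R ![v, a])
    (hrel2r : ∀ u ∈ U, ∀ v ∈ U, ∀ a ∈ (A : Set M), ∀ R : L.Relations 2,
      RelMap R ![a, u] ↔ RelMap R ![a, v]) :
    L.IsUltrahomogeneous ↥(ofSet (L := L) U) := by
  intro S hS f
  haveI : Finite ↥S := hS.finite
  set P : M → Prop :=
    fun m => ∃ h : m ∈ ofSet (L := L) U, (⟨m, h⟩ : ↥(ofSet (L := L) U)) ∈ S with hP
  have hPU : ∀ m, P m → m ∈ U := fun m hm => hm.choose
  have hPfin : {m | P m}.Finite := by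
    have hsub : {m | P m} ⊆ Set.range (fun s : ↥S => ((s : ↥(ofSet (L := L) U)) : M)) :=
      fun m hm => ⟨⟨⟨m, hm.choose⟩, hm.choose_spec⟩, rfl⟩
    exact (Set.finite_range _).subset hsub
  set W : L.Substructure M := ofSet (L := L) ({m | P m} ∪ (A : Set M)) with hW
  have hWFG : W.FG := by
    haveI h1 : Finite ↥({m | P m} ∪ (A : Set M)) := (hPfin.union hA).to_subtype
    haveI : Finite ↥W := h1
    exact Substructure.FG.of_finite
  set h : ↥W → M := extFun U S f with hh
  -- basic values
  have hin : ∀ w : ↥W, P (w : M) ∨ (w : M) ∈ (A : Set M) := fun w => w.2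
  have hval_pos : ∀ (w : ↥W) (h1 : (w : M) ∈ ofSet (L := L) U)
      (h2 : (⟨(w : M), h1⟩ : ↥(ofSet (L := L) U)) ∈ S),
      h w = ↑(f ⟨⟨(w : M), h1⟩, h2⟩) := fun w h1 h2 => extFun_pos w h1 h2
  have hval_neg : ∀ (w : ↥W), ¬ P (w : M) → h w = (w : M) := fun w hw => extFun_neg w hw
  have hmemU : ∀ (w : ↥W), P (w : M) → h w ∈ U := by
    intro w hw
    rw [hval_pos w hw.choose hw.choose_spec]
    exact (f ⟨⟨(w : M), hw.choose⟩, hw.choose_spec⟩).2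
  have hAneg : ∀ (w : ↥W), ¬ P (w : M) → (w : M) ∈ (A : Set M) :=
    fun w hw => (hin w).resolve_left hw
  -- injectivity
  have hinj : Function.Injective h := by
    intro w1 w2 heq
    by_cases p1 : P (w1 : M) <;> by_cases p2 : P (w2 : M)
    · obtain ⟨a1, b1⟩ := p1
      obtain ⟨a2, b2⟩ := p2
      rw [hval_pos w1 a1 b1, hval_pos w2 a2 b2] at heq
      have h3 : (⟨⟨(w1 : M), a1⟩, b1⟩ : ↥S) = ⟨⟨(w2 : M), a2⟩, b2⟩ :=
        f.injective (Subtype.ext heq)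
      exact Subtype.ext (congrArg (fun z : ↥S => ((z : ↥(ofSet (L := L) U)) : M)) h3)
    · exfalso
      rw [hval_neg w2 p2] at heq
      exact hUA _ (hAneg w2 p2) (heq ▸ hmemU w1 p1)
    · exfalso
      rw [hval_neg w1 p1] at heq
      exact hUA _ (hAneg w1 p1) (heq.symm ▸ hmemU w2 p2)
    · rw [hval_neg w1 p1, hval_neg w2 p2] at heq
      exact Subtype.ext heq
  -- uniform all-P case
  have huniform : ∀ {n : ℕ} (R : L.Relations n) (x : Fin n → ↥W), (∀ i, P ((x i : M))) →
      (RelMap R (h ∘ x) ↔ RelMap R (fun i => ((x i : M)))) := by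
    intro n R x hall
    have e1 : h ∘ x = fun i => ((f ⟨⟨((x i : M)), (hall i).choose⟩, (hall i).choose_spec⟩ :
        ↥(ofSet (L := L) U)) : M) :=
      funext fun i => hval_pos (x i) (hall i).choose (hall i).choose_spec
    rw [e1]
    exact f.map_rel R (fun i => ⟨⟨((x i : M)), (hall i).choose⟩, (hall i).choose_spec⟩)
  -- the relation-preservation
  have hrelmap : ∀ {n : ℕ} (R : L.Relations n) (x : Fin n → ↥W),
      (RelMap R (h ∘ x) ↔ RelMap R (fun i => ((x i : M)))) := by
    intro n R x
    match n, R, x with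
    | 0, R, x => exact huniform R x (fun i => i.elim0)
    | 1, R, x =>
      by_cases hp : P ((x 0 : M))
      · exact huniform R x (fun i => by rw [Subsingleton.elim i 0]; exact hp)
      · have e : h ∘ x = fun i => ((x i : M)) := funext fun i => by
          rw [Subsingleton.elim i 0]; exact hval_neg (x 0) hp
        rw [e]
    | 2, R, x =>
      have e2 : (fun i => ((x i : M))) = ![((x 0 : M)), ((x 1 : M))] := by
        funext i
        refine Fin.cases ?_ (fun j => ?_) i
        · simp
        · rw [Subsingleton.elim j 0]
          simp [Fin.succ_zero_eq_one]
      by_cases h0 : P ((x 0 : M)) <;> by_cases h1 : P ((x 1 : M))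
      · refine huniform R x (fun i => ?_)
        refine Fin.cases h0 (fun j => ?_) i
        rw [Subsingleton.elim j 0, Fin.succ_zero_eq_one]
        exact h1
      · obtain ⟨hu0, hs0⟩ := h0
        have ha1 : ((x 1 : M)) ∈ (A : Set M) := hAneg (x 1) h1
        have e1 : h ∘ x = ![((f ⟨⟨((x 0 : M)), hu0⟩, hs0⟩ : ↥(ofSet (L := L) U)) : M),
            ((x 1 : M))] := by
          funext i
          refine Fin.cases ?_ (fun j => ?_) i
          · simpa using hval_pos (x 0) hu0 hs0
          · rw [Subsingleton.elim j 0]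
            simpa [Fin.succ_zero_eq_one] using hval_neg (x 1) h1
        rw [e1, e2]
        exact hrel2l _ (f ⟨⟨((x 0 : M)), hu0⟩, hs0⟩).2 _ hu0 _ ha1 R
      · obtain ⟨hu1, hs1⟩ := h1
        have ha0 : ((x 0 : M)) ∈ (A : Set M) := hAneg (x 0) h0
        have e1 : h ∘ x = ![((x 0 : M)),
            ((f ⟨⟨((x 1 : M)), hu1⟩, hs1⟩ : ↥(ofSet (L := L) U)) : M)] := by
          funext i
          refine Fin.cases ?_ (fun j => ?_) i
          · simpa using hval_neg (x 0) h0
          · rw [Subsingleton.elim j 0]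
            simpa [Fin.succ_zero_eq_one] using hval_pos (x 1) hu1 hs1
        rw [e1, e2]
        exact hrel2r _ (f ⟨⟨((x 1 : M)), hu1⟩, hs1⟩).2 _ hu1 _ ha0 R
      · have e1 : h ∘ x = fun i => ((x i : M)) := by
          funext i
          refine Fin.cases ?_ (fun j => ?_) i
          · exact hval_neg (x 0) h0
          · rw [Subsingleton.elim j 0, Fin.succ_zero_eq_one]
            exact hval_neg (x 1) h1
        rw [e1]
    | (k+3), R, x => exact ((hbin _ (by omega)).false R).elim
  -- the embedding of W into M
  let emb : ↥W ↪[L] M :=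
    { toFun := h
      inj' := hinj
      map_fun' := fun {n} F _ => isEmptyElim F
      map_rel' := fun {n} R x => hrelmap R x }
  obtain ⟨g, hg⟩ := hM W hWFG emb
  have hgw : ∀ w : ↥W, h w = g (w : M) := fun w => congrFun (congrArg DFunLike.coe hg) w
  have hfixA : ∀ a ∈ (A : Set M), g a = a := by
    intro a ha
    have h1 := hgw ⟨a, Or.inr ha⟩
    rw [hval_neg ⟨a, Or.inr ha⟩ (fun hp => hUA a ha (hPU a hp))] at h1
    exact h1.symm
  have hgU : ∀ v ∈ U, g v ∈ U := hfix g hfixA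
  have hsymmA : ∀ a ∈ (A : Set M), g.symm a = a := by
    intro a ha
    conv_lhs => rw [← hfixA a ha]
    exact g.symm_apply_apply a
  have hgU' : ∀ v ∈ U, g.symm v ∈ U := hfix g.symm hsymmA
  refine ⟨{ toFun := fun t => ⟨g (t : M), hgU _ t.2⟩
            invFun := fun t => ⟨g.symm (t : M), hgU' _ t.2⟩
            left_inv := fun t => Subtype.ext (g.symm_apply_apply _)
            right_inv := fun t => Subtype.ext (g.apply_symm_apply _)
            map_fun' := fun {n} F _ => isEmptyElim F
            map_rel' := fun {n} R y => g.map_rel R (fun i => ((y i : M))) }, ?_⟩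
  apply Embedding.ext
  intro s
  apply Subtype.ext
  have h1' : ((s : ↥(ofSet (L := L) U)) : M) ∈ ofSet (L := L) U := (s : ↥(ofSet (L := L) U)).2
  have h2' : (⟨((s : ↥(ofSet (L := L) U)) : M), h1'⟩ : ↥(ofSet (L := L) U)) ∈ S := by
    rw [Subtype.coe_eta]; exact s.2
  have hw : ((s : ↥(ofSet (L := L) U)) : M) ∈ W := Or.inl ⟨h1', h2'⟩
  have e1 := hgw ⟨_, hw⟩
  rw [hval_pos ⟨_, hw⟩ h1' h2'] at e1
  have e2 : (⟨⟨((s : ↥(ofSet (L := L) U)) : M), h1'⟩, h2'⟩ : ↥S) = s :=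
    Subtype.ext (Subtype.ext rfl)
  rw [e2] at e1
  rw [Embedding.comp_apply]
  show ((f s : ↥(ofSet (L := L) U)) : M) = g ((s : ↥(ofSet (L := L) U)) : M)
  exact e1

end Aux12

end Aux12

theorem statement12 (L : FirstOrder.Language.{u, v}) [L.IsRelational]
    (hbin : ∀ n : ℕ, 2 < n → IsEmpty (L.Relations n))
    (M : Type w) [L.Structure M] [Countable M]
    (hM : L.IsUltrahomogeneous M)
    (hrepl : LocallyReplicable L M) :
    ∀ A : L.Substructure M, (A : Set M).Finite → ∀ b : M, b ∉ (A : Set M) →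
      IsCopy L M {v : M | SameQfTypeOver L M (A : Set M) v b} := by
  intro A hA b hb
  set U : Set M := {v : M | SameQfTypeOver L M (A : Set M) v b} with hUdef
  -- elements of A are not in U
  have hUA : ∀ a ∈ (A : Set M), a ∉ U := by
    intro a ha haU
    have key := haU 1 (Term.equal (Term.var 0) (Term.var (Fin.succ 0)))
      ((BoundedFormula.IsAtomic.equal _ _).isQF) ![a]
      (fun i => by rw [Subsingleton.elim i 0]; simpa using ha)
    simp only [Formula.realize_equal, Term.realize, Fin.cons_zero, Fin.cons_succ,
      Matrix.cons_val_zero] at key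
    have hba : b = a := by simpa using key
    rw [hba] at hb
    exact hb ha
  -- automorphisms fixing A preserve U
  have hfix : ∀ σ : M ≃[L] M, (∀ a ∈ (A : Set M), σ a = a) → ∀ v ∈ U, σ v ∈ U := by
    intro σ hσ v hv n φ hφ g hg
    have e : Fin.cons (σ v) g = ⇑σ ∘ Fin.cons v g := by
      funext i
      refine Fin.cases ?_ (fun j => ?_) i
      · simp
      · simp [hσ _ (hg j)]
    rw [e, StrongHomClass.realize_formula]
    exact hv n φ hφ g hg
  -- binary relation transfer
  have hrel2l : ∀ u ∈ U, ∀ v ∈ U, ∀ a ∈ (A : Set M), ∀ R : L.Relations 2,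
      RelMap R ![u, a] ↔ RelMap R ![v, a] := by
    have base : ∀ a ∈ (A : Set M), ∀ w ∈ U, ∀ R : L.Relations 2,
        RelMap R ![w, a] ↔ RelMap R ![b, a] := by
      intro a ha w hw R
      have key := hw 1 (R.formula ![Term.var 0, Term.var (Fin.succ 0)])
        ((BoundedFormula.IsAtomic.rel _ _).isQF) ![a]
        (fun i => by rw [Subsingleton.elim i 0]; simpa using ha)
      rw [Formula.realize_rel, Formula.realize_rel] at key
      have tupkey : ∀ m : M,
          (fun i => Term.realize (Fin.cons m ![a])
            ((![Term.var 0, Term.var (Fin.succ 0)] : Fin 2 → L.Term (Fin 2)) i)) = ![m, a] := by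
        intro m
        funext i
        refine Fin.cases ?_ (fun j => ?_) i
        · simp [Term.realize]
        · rw [Subsingleton.elim j 0]
          simp [Term.realize, Fin.succ_zero_eq_one]
      rw [tupkey w, tupkey b] at key
      exact key
    intro u hu v hv a ha R
    exact (base a ha u hu R).trans (base a ha v hv R).symm
  have hrel2r : ∀ u ∈ U, ∀ v ∈ U, ∀ a ∈ (A : Set M), ∀ R : L.Relations 2,
      RelMap R ![a, u] ↔ RelMap R ![a, v] := by
    have base : ∀ a ∈ (A : Set M), ∀ w ∈ U, ∀ R : L.Relations 2,
        RelMap R ![a, w] ↔ RelMap R ![a, b] := by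
      intro a ha w hw R
      have key := hw 1 (R.formula ![Term.var (Fin.succ 0), Term.var 0])
        ((BoundedFormula.IsAtomic.rel _ _).isQF) ![a]
        (fun i => by rw [Subsingleton.elim i 0]; simpa using ha)
      rw [Formula.realize_rel, Formula.realize_rel] at key
      have tupkey : ∀ m : M,
          (fun i => Term.realize (Fin.cons m ![a])
            ((![Term.var (Fin.succ 0), Term.var 0] : Fin 2 → L.Term (Fin 2)) i)) = ![a, m] := by
        intro m
        funext i
        refine Fin.cases ?_ (fun j => ?_) i
        · simp [Term.realize]
        · rw [Subsingleton.elim j 0]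
          simp [Term.realize, Fin.succ_zero_eq_one]
      rw [tupkey w, tupkey b] at key
      exact key
    intro u hu v hv a ha R
    exact (base a ha u hu R).trans (base a ha v hv R).symm
  -- ultrahomogeneity of the induced structure
  have hhom : L.IsUltrahomogeneous ↥(Aux12.ofSet (L := L) U) :=
    Aux12.ultra_aux hbin hM A hA U hUA hfix hrel2l hrel2r
  -- a copy of M inside U
  obtain ⟨S₀, hS₀U, ⟨e₀⟩⟩ := hrepl A hA b hb
  have hle : S₀ ≤ Aux12.ofSet (L := L) U := fun x hx => hS₀U hx
  -- age equality
  have hage : L.age ↥(Aux12.ofSet (L := L) U) = L.age M := by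
    ext N
    constructor
    · rintro ⟨hNfg, ⟨emb⟩⟩
      exact ⟨hNfg, ⟨(Aux12.ofSet (L := L) U).subtype.comp emb⟩⟩
    · rintro ⟨hNfg, ⟨emb⟩⟩
      exact ⟨hNfg, ⟨(Substructure.inclusion hle).comp (e₀.symm.toEmbedding.comp emb)⟩⟩
  haveI : IsEmpty (Σ l, L.Functions l) := ⟨fun p => isEmptyElim p.2⟩
  haveI : Countable ((l : ℕ) × L.Functions l) := inferInstance
  have lim1 : IsFraisseLimit (L.age M) ↥(Aux12.ofSet (L := L) U) := ⟨hhom, hage⟩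
  have lim2 : IsFraisseLimit (L.age M) M := ⟨hM, rfl⟩
  exact ⟨Aux12.ofSet (L := L) U, rfl, lim1.nonempty_equiv lim2⟩
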